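/- Let G be a finite group and H a subgroup. H is a perfect code of G (admits an inverse-closed right transversal in G) if and only if for every x ∈ G such that HxH = Hx⁻¹H and |H|/|H ∩ H^x| is odd, there exists y ∈ Hx with y² = 1. -/

import Mathlib

open scoped Pointwise

section Generic
variable {α β : Type*}

private lemma pc_card_filter_erase [DecidableEq α] (t : Finset α) (p : α → Prop) [DecidablePred p]
    {a : α} (ha : a ∈ t) :
    ((t.erase a).filter p).card = (t.filter p).card - (if p a then 1 else 0) := by
  rw [Finset.filter_erase]
  by_cases h : p a
  · rw [if_pos h, Finset.card_erase_of_mem (Finset.mem_filter.2 ⟨ha, h⟩)]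
  · rw [if_neg h, Finset.erase_eq_of_notMem, Nat.sub_zero]
    simp [Finset.mem_filter, h]

private lemma pc_exists_fixed [Finite α] (f : α → α) (hf : ∀ a, f (f a) = a)
    (ho : Odd (Nat.card α)) : ∃ a, f a = a := by
  classical
  cases nonempty_fintype α
  by_contra hno
  push_neg at hno
  haveI : Fact (Nat.Prime 2) := ⟨Nat.prime_two⟩
  have h2 : (show Function.End α from f) ^ (2:ℕ) ^ (1:ℕ) = 1 := by
    have key : ∀ a, ((show Function.End α from f) ^ (2:ℕ) ^ (1:ℕ)) a = (1 : Function.End α) a := by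
      intro a
      show f (f a) = a
      exact hf a
    exact funext key
  have hmod := Equiv.Perm.card_fixedPoints_modEq (p := 2) (n := 1) h2
  have hempty : Fintype.card (Function.fixedPoints (show Function.End α from f)) = 0 := by
    rw [Fintype.card_eq_zero_iff]
    exact ⟨fun ⟨a, haf⟩ => hno a haf⟩
  rw [hempty] at hmod
  rw [Nat.card_eq_fintype_card] at ho
  have h3 : (2:ℕ) ∣ Fintype.card α := (Nat.modEq_zero_iff_dvd.mp hmod)
  rcases ho with ⟨k, hk⟩
  rcases h3 with ⟨m, hm⟩
  omega

end Generic

section Matching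
variable {α β : Type*}

private lemma pc_step [DecidableEq α] (π : α → β) (F : β → β) (Good : β → Prop)
    {s : Finset α} {a a' : α} (ha : a ∈ s) (ha' : a' ∈ s)
    (hπ : π a' = F (π a)) (hFF : F (F (π a)) = π a)
    (hgood : a' = a → Good (π a))
    (σ' : α → α)
    (h1 : ∀ x ∈ (s.erase a).erase a', σ' x ∈ (s.erase a).erase a')
    (h2 : ∀ x ∈ (s.erase a).erase a', σ' (σ' x) = x)
    (h3 : ∀ x ∈ (s.erase a).erase a', π (σ' x) = F (π x))
    (h4 : ∀ x ∈ (s.erase a).erase a', σ' x = x → Good (π x)) :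
    ∃ σ : α → α, (∀ x ∈ s, σ x ∈ s) ∧ (∀ x ∈ s, σ (σ x) = x) ∧
      (∀ x ∈ s, π (σ x) = F (π x)) ∧ (∀ x ∈ s, σ x = x → Good (π x)) := by
  classical
  set σ : α → α := fun x => if x = a then a' else if x = a' then a else σ' x with hσ
  have hmem' : ∀ x, x ∈ s → x ≠ a → x ≠ a' → x ∈ (s.erase a).erase a' := by
    intro x hx hxa hxa'
    exact Finset.mem_erase.2 ⟨hxa', Finset.mem_erase.2 ⟨hxa, hx⟩⟩
  have hne' : ∀ x ∈ (s.erase a).erase a', σ' x ≠ a ∧ σ' x ≠ a' ∧ σ' x ∈ s := by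
    intro x hx
    have := h1 x hx
    rw [Finset.mem_erase, Finset.mem_erase] at this
    exact ⟨this.2.1, this.1, this.2.2⟩
  have hσa : σ a = a' := by simp [hσ]
  have hσa' : σ a' = a := by
    by_cases h : a' = a
    · simp [hσ, h]
    · simp [hσ, h]
  refine ⟨σ, ?_, ?_, ?_, ?_⟩
  · intro x hx
    by_cases hxa : x = a
    · rw [hxa, hσa]; exact ha'
    by_cases hxa' : x = a'
    · rw [hxa', hσa']; exact ha
    have := (hne' x (hmem' x hx hxa hxa')).2.2
    simpa [hσ, hxa, hxa'] using this
  · intro x hx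
    by_cases hxa : x = a
    · rw [hxa, hσa, hσa']
    by_cases hxa' : x = a'
    · rw [hxa', hσa', hσa]
    have hxs := hmem' x hx hxa hxa'
    obtain ⟨hna, hna', _⟩ := hne' x hxs
    have : σ x = σ' x := by simp [hσ, hxa, hxa']
    rw [this]
    have : σ (σ' x) = σ' (σ' x) := by simp [hσ, hna, hna']
    rw [this]
    exact h2 x hxs
  · intro x hx
    by_cases hxa : x = a
    · rw [hxa, hσa, hπ]
    by_cases hxa' : x = a'
    · rw [hxa', hσa', hπ, hFF]
    have hxs := hmem' x hx hxa hxa'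
    have : σ x = σ' x := by simp [hσ, hxa, hxa']
    rw [this]
    exact h3 x hxs
  · intro x hx hfix
    by_cases hxa : x = a
    · rw [hxa] at hfix ⊢
      rw [hσa] at hfix
      exact hgood hfix
    by_cases hxa' : x = a'
    · rw [hxa'] at hfix ⊢
      rw [hσa'] at hfix
      exact absurd (hxa'.trans hfix.symm) hxa
    have hxs := hmem' x hx hxa hxa'
    have : σ x = σ' x := by simp [hσ, hxa, hxa']
    rw [this] at hfix
    exact h4 x hxs hfix

end Matching

section MatchingMain
variable {α β : Type*}

private lemma pc_matching_aux [DecidableEq α] [DecidableEq β] (π : α → β) (F : β → β)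
    (hF : ∀ b, F (F b) = b) (Good : β → Prop) (s : Finset α) :
    (∀ b, (s.filter fun x => π x = F b).card = (s.filter fun x => π x = b).card) →
    (∀ b, F b = b → Odd (s.filter fun x => π x = b).card → Good b) →
    ∃ σ : α → α, (∀ x ∈ s, σ x ∈ s) ∧ (∀ x ∈ s, σ (σ x) = x) ∧
      (∀ x ∈ s, π (σ x) = F (π x)) ∧ (∀ x ∈ s, σ x = x → Good (π x)) := by
  have hFinj : ∀ {c c' : β}, F c = F c' → c = c' := by
    intro c c' h
    have := congrArg F h
    rwa [hF, hF] at this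
  induction s using Finset.strongInduction with
  | _ s ih =>
    intro hc ho
    rcases s.eq_empty_or_nonempty with rfl | ⟨a, ha⟩
    · exact ⟨id, by simp, by simp, by simp, by simp⟩
    by_cases hb : F (π a) = π a
    · by_cases hpair : ∃ a' ∈ s.filter (fun x => π x = π a), a' ≠ a
      · -- pair within the same self-inverse fiber
        obtain ⟨a', ha'f, hne⟩ := hpair
        obtain ⟨ha's, hπa'⟩ := Finset.mem_filter.1 ha'f
        have ha'e : a' ∈ s.erase a := Finset.mem_erase.2 ⟨hne, ha's⟩
        have hss : (s.erase a).erase a' ⊂ s :=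
          Finset.ssubset_of_subset_of_ssubset (Finset.erase_subset _ _) (Finset.erase_ssubset ha)
        have hcard : ∀ p : α → Prop, ∀ _ : DecidablePred p,
            (((s.erase a).erase a').filter p).card
              = (s.filter p).card - (if p a then 1 else 0) - (if p a' then 1 else 0) := by
          intro p hp
          rw [pc_card_filter_erase _ _ ha'e, pc_card_filter_erase _ _ ha]
        have hcnt : ∀ c, (((s.erase a).erase a').filter fun x => π x = c).card
            = (s.filter fun x => π x = c).card
              - (if π a = c then 1 else 0) - (if π a' = c then 1 else 0) := fun c => hcard _ _
        have hiff : ∀ c, (π a = F c) ↔ (π a = c) := by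
          intro c
          constructor
          · intro h
            calc π a = F (π a) := hb.symm
            _ = F (F c) := congrArg F h
            _ = c := hF c
          · intro h
            rw [← h]
            exact hb.symm
        have hc' : ∀ c, ((((s.erase a).erase a').filter fun x => π x = F c).card
            = (((s.erase a).erase a').filter fun x => π x = c).card) := by
          intro c
          rw [hcnt, hcnt, hc c, hπa']
          have e1 : (if π a = F c then 1 else 0) = (if π a = c then 1 else 0) := by
            simp only [hiff c]
          rw [e1]
        have ho' : ∀ c, F c = c → Odd ((((s.erase a).erase a').filter fun x => π x = c).card) →
            Good c := by
          intro c hfc hoc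
          rw [hcnt] at hoc
          by_cases hbc : π a = c
          · rw [if_pos hbc, if_pos (hπa'.trans hbc)] at hoc
            have h2 : 1 < (s.filter fun x => π x = c).card :=
              Finset.one_lt_card.2 ⟨a, Finset.mem_filter.2 ⟨ha, hbc⟩, a',
                Finset.mem_filter.2 ⟨ha's, hπa'.trans hbc⟩, fun h => hne h.symm⟩
            refine ho c hfc ?_
            rcases hoc with ⟨k, hk⟩
            exact ⟨k + 1, by omega⟩
          · rw [if_neg hbc, if_neg (fun h => hbc (hπa'.symm ▸ h : π a = c))] at hoc
            exact ho c hfc (by simpa using hoc)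
        obtain ⟨σ', k1, k2, k3, k4⟩ := ih _ hss hc' ho'
        exact pc_step π F Good ha ha's (hπa'.trans hb.symm) (by rw [hb, hb])
          (fun h => absurd h hne) σ' k1 k2 k3 k4
      · -- singleton self-paired fiber
        push_neg at hpair
        have hsingle : s.filter (fun x => π x = π a) = {a} := by
          apply Finset.eq_singleton_iff_unique_mem.2
          exact ⟨Finset.mem_filter.2 ⟨ha, rfl⟩, hpair⟩
        have hgood : Good (π a) := ho _ hb (by rw [hsingle]; simp)
        have hss : s.erase a ⊂ s := Finset.erase_ssubset ha
        have hcnt : ∀ c, ((s.erase a).filter fun x => π x = c).card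
            = (s.filter fun x => π x = c).card - (if π a = c then 1 else 0) := by
          intro c
          rw [pc_card_filter_erase _ _ ha]
        have hiff : ∀ c, (π a = F c) ↔ (π a = c) := by
          intro c
          constructor
          · intro h
            calc π a = F (π a) := hb.symm
            _ = F (F c) := congrArg F h
            _ = c := hF c
          · intro h
            rw [← h]
            exact hb.symm
        have hc' : ∀ c, (((s.erase a).filter fun x => π x = F c).card
            = ((s.erase a).filter fun x => π x = c).card) := by
          intro c
          rw [hcnt, hcnt, hc c]
          have e1 : (if π a = F c then 1 else 0) = (if π a = c then 1 else 0) := by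
            simp only [hiff c]
          rw [e1]
        have ho' : ∀ c, F c = c → Odd (((s.erase a).filter fun x => π x = c).card) → Good c := by
          intro c hfc hoc
          rw [hcnt] at hoc
          by_cases hbc : π a = c
          · rw [if_pos hbc] at hoc
            rw [← hbc, hsingle] at hoc
            simp at hoc
          · rw [if_neg hbc] at hoc
            exact ho c hfc (by simpa using hoc)
        obtain ⟨σ', k1, k2, k3, k4⟩ := ih _ hss hc' ho'
        rw [← Finset.erase_idem (s := s) (a := a)] at k1 k2 k3 k4
        exact pc_step π F Good ha ha hb.symm (by rw [hb, hb]) (fun _ => hgood) σ' k1 k2 k3 k4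
    · -- cross double-coset case
      have hafib : a ∈ s.filter fun x => π x = π a := Finset.mem_filter.2 ⟨ha, rfl⟩
      have hpos : 0 < (s.filter fun x => π x = F (π a)).card := by
        rw [hc (π a)]
        exact Finset.card_pos.2 ⟨a, hafib⟩
      obtain ⟨a', ha'f⟩ := Finset.card_pos.1 hpos
      obtain ⟨ha's, hπa'⟩ := Finset.mem_filter.1 ha'f
      have hne : a' ≠ a := fun h => hb (by rw [← hπa', h])
      have ha'e : a' ∈ s.erase a := Finset.mem_erase.2 ⟨hne, ha's⟩
      have hss : (s.erase a).erase a' ⊂ s :=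
        Finset.ssubset_of_subset_of_ssubset (Finset.erase_subset _ _) (Finset.erase_ssubset ha)
      have hcnt : ∀ c, (((s.erase a).erase a').filter fun x => π x = c).card
          = (s.filter fun x => π x = c).card
            - (if π a = c then 1 else 0) - (if π a' = c then 1 else 0) := by
        intro c
        rw [pc_card_filter_erase _ _ ha'e, pc_card_filter_erase _ _ ha]
      have hiff1 : ∀ c, (π a = F c) ↔ (π a' = c) := by
        intro c
        constructor
        · intro h
          calc π a' = F (π a) := hπa'
          _ = F (F c) := congrArg F h
          _ = c := hF c
        · intro h
          calc π a = F (F (π a)) := (hF _).symm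
          _ = F c := congrArg F (hπa'.symm.trans h)
      have hiff2 : ∀ c, (π a' = F c) ↔ (π a = c) := by
        intro c
        constructor
        · intro h
          exact hFinj (hπa'.symm.trans h)
        · intro h
          exact hπa'.trans (congrArg F h)
      have hc' : ∀ c, ((((s.erase a).erase a').filter fun x => π x = F c).card
          = (((s.erase a).erase a').filter fun x => π x = c).card) := by
        intro c
        rw [hcnt, hcnt, hc c]
        have e1 : (if π a = F c then 1 else 0) = (if π a' = c then 1 else 0) := by
          simp only [hiff1 c]
        have e2 : (if π a' = F c then 1 else 0) = (if π a = c then 1 else 0) := by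
          simp only [hiff2 c]
        rw [e1, e2]
        omega
      have ho' : ∀ c, F c = c → Odd ((((s.erase a).erase a').filter fun x => π x = c).card) →
          Good c := by
        intro c hfc hoc
        rw [hcnt] at hoc
        have hbc : π a ≠ c := by
          intro h
          rw [← h] at hfc
          exact hb hfc
        have hbc' : π a' ≠ c := by
          intro h
          have e1 : F (π a) = c := hπa'.symm.trans h
          have e2 : π a = c := hFinj (e1.trans hfc.symm)
          exact hb (e1.trans e2.symm)
        rw [if_neg hbc, if_neg hbc'] at hoc
        exact ho c hfc (by simpa using hoc)
      obtain ⟨σ', k1, k2, k3, k4⟩ := ih _ hss hc' ho'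
      exact pc_step π F Good ha ha's hπa' (by rw [hF]) (fun h => absurd ((h ▸ hπa' : π a = F (π a)).symm) hb) σ'
        k1 k2 k3 k4

end MatchingMain

private lemma pc_matching {α β : Type*} [Finite α] (π : α → β) (F : β → β)
    (hF : ∀ b, F (F b) = b) (Good : β → Prop)
    (hcard : ∀ b, Nat.card {a // π a = F b} = Nat.card {a // π a = b})
    (hodd : ∀ b, F b = b → Odd (Nat.card {a // π a = b}) → Good b) :
    ∃ σ : α → α, (∀ a, σ (σ a) = a) ∧ (∀ a, π (σ a) = F (π a)) ∧
      (∀ a, σ a = a → Good (π a)) := by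
  classical
  cases nonempty_fintype α
  have key : ∀ b, (Finset.univ.filter fun a => π a = b).card = Nat.card {a // π a = b} := by
    intro b
    rw [Nat.card_eq_fintype_card, Fintype.card_subtype]
  obtain ⟨σ, -, h2, h3, h4⟩ := pc_matching_aux π F hF Good Finset.univ
      (fun b => by rw [key, key, hcard]) (fun b hb h => hodd b hb (by rwa [key] at h))
  exact ⟨σ, fun a => h2 a (Finset.mem_univ a), fun a => h3 a (Finset.mem_univ a),
    fun a => h4 a (Finset.mem_univ a)⟩

section PC
variable {G : Type*} [Group G]

private lemma pc_mk_eq (H : Subgroup G) {g1 g2 : G} :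
    (Quotient.mk'' g1 : Quotient (QuotientGroup.rightRel H)) = Quotient.mk'' g2 ↔
      g2 * g1⁻¹ ∈ H := by
  rw [Quotient.eq'']
  exact QuotientGroup.rightRel_apply

private def pcPi (H : Subgroup G) (q : Quotient (QuotientGroup.rightRel H)) :
    DoubleCoset.Quotient (H : Set G) (H : Set G) :=
  Quotient.liftOn' q (fun g => DoubleCoset.mk H H g) (by
    intro x y hxy
    have hxy' : y * x⁻¹ ∈ H := QuotientGroup.rightRel_apply.1 hxy
    exact ((DoubleCoset.eq H H x y).2 ⟨y * x⁻¹, hxy', 1, one_mem _, by group⟩))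

private lemma pcPi_mk (H : Subgroup G) (g : G) :
    pcPi H (Quotient.mk'' g) = DoubleCoset.mk H H g := rfl

private def pcF (H : Subgroup G) (b : DoubleCoset.Quotient (H : Set G) (H : Set G)) :
    DoubleCoset.Quotient (H : Set G) (H : Set G) :=
  Quotient.liftOn' b (fun g => DoubleCoset.mk H H g⁻¹) (by
    intro x y hxy
    obtain ⟨a, haH, c, hcH, rfl⟩ := DoubleCoset.rel_iff.1 hxy
    exact (DoubleCoset.eq H H x⁻¹ (a * x * c)⁻¹).2 ⟨c⁻¹, inv_mem hcH, a⁻¹, inv_mem haH, by group⟩)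

private lemma pcF_mk (H : Subgroup G) (g : G) :
    pcF H (DoubleCoset.mk H H g) = DoubleCoset.mk H H g⁻¹ := rfl

private lemma pcF_invol (H : Subgroup G) : ∀ b, pcF H (pcF H b) = b := by
  intro b
  induction b using Quotient.inductionOn' with
  | h g => show DoubleCoset.mk H H g⁻¹⁻¹ = DoubleCoset.mk H H g; rw [inv_inv]

private lemma pc_mk_eq_doset (H : Subgroup G) {a b : G} :
    DoubleCoset.mk H H a = DoubleCoset.mk H H b ↔ DoubleCoset.doubleCoset a (H : Set G) H = DoubleCoset.doubleCoset b (H : Set G) H := by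
  constructor
  · intro h
    exact DoubleCoset.doubleCoset_eq_of_mem ((DoubleCoset.mem_doubleCoset).2
      (by obtain ⟨x, hx, y, hy, hh⟩ := (DoubleCoset.eq H H a b).1 h; exact ⟨x, hx, y, hy, hh⟩)) |>.symm
  · intro h
    refine (DoubleCoset.eq H H a b).2 ?_
    have : b ∈ DoubleCoset.doubleCoset a (H : Set G) H := by
      rw [h]; exact DoubleCoset.mem_doubleCoset_self H H b
    obtain ⟨x, hx, y, hy, hh⟩ := DoubleCoset.mem_doubleCoset.1 this
    exact ⟨x, hx, y, hy, hh⟩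

private def pcGood (H : Subgroup G) (b : DoubleCoset.Quotient (H : Set G) (H : Set G)) : Prop :=
  ∃ t : G, DoubleCoset.mk H H t = b ∧ t ^ 2 = 1

private lemma pc_mem_coset (H : Subgroup G) {y z : G} :
    y ∈ (H : Set G) * {z} ↔ y * z⁻¹ ∈ H := by
  rw [Set.mul_singleton]
  constructor
  · rintro ⟨h, hh, rfl⟩
    simpa using hh
  · intro h
    exact ⟨y * z⁻¹, h, by group⟩

private lemma pc_spread (H : Subgroup G) {u z : G} (hu : u ∈ DoubleCoset.doubleCoset z (H : Set G) H)
    (h2 : u ^ 2 = 1) : ∃ y ∈ (H : Set G) * {z}, y ^ 2 = 1 := by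
  obtain ⟨a, haH, b, hbH, rfl⟩ := DoubleCoset.mem_doubleCoset.1 hu
  refine ⟨b * (a * z * b) * b⁻¹, ?_, ?_⟩
  · rw [pc_mem_coset]
    have : b * (a * z * b) * b⁻¹ * z⁻¹ = b * a := by group
    rw [this]
    exact mul_mem hbH haH
  · have h3 : (b * (a * z * b) * b⁻¹) ^ 2 = b * (a * z * b) ^ 2 * b⁻¹ := by
      rw [sq, sq]
      group
    rw [h3, h2]
    group

end PC

section Counting
variable {G : Type*} [Group G]

private lemma pc_card_fiber [Fintype G] (H : Subgroup G) (x : G) :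
    Nat.card {q : Quotient (QuotientGroup.rightRel H) // pcPi H q = DoubleCoset.mk H H x} *
      Nat.card (H ⊓ H.map (MulAut.conj x⁻¹).toMonoidHom : Subgroup G) = Nat.card H := by
  classical
  set Kx : Subgroup G := H ⊓ H.map (MulAut.conj x⁻¹).toMonoidHom with hKx
  have hKle : Kx ≤ H := inf_le_left
  set K' : Subgroup H := Kx.subgroupOf H with hK'
  -- the map φ
  let φ : ↥H → {q : Quotient (QuotientGroup.rightRel H) // pcPi H q = DoubleCoset.mk H H x} :=
    fun h => ⟨Quotient.mk'' (x * (h : G)⁻¹), by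
      rw [pcPi_mk]
      exact (DoubleCoset.eq H H (x * (h : G)⁻¹) x).2
        ⟨1, one_mem _, (h : G), h.2, by group⟩⟩
  have wd : ∀ (h h' : ↥H), (QuotientGroup.leftRel K') h h' → φ h = φ h' := by
    intro h h' hrel
    have hmem : h⁻¹ * h' ∈ K' := QuotientGroup.leftRel_apply.1 hrel
    rw [hK', Subgroup.mem_subgroupOf] at hmem
    obtain ⟨-, w, hwH, hw⟩ := hmem
    simp only [MulEquiv.coe_toMonoidHom, MulAut.conj_apply, inv_inv] at hw
    -- hw : x⁻¹ * w * x = ↑(h⁻¹ * h')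
    apply Subtype.ext
    show (Quotient.mk'' (x * (h : G)⁻¹) : Quotient (QuotientGroup.rightRel H)) =
      Quotient.mk'' (x * (h' : G)⁻¹)
    rw [pc_mk_eq]
    have hw' : w = x * ((h : G)⁻¹ * (h' : G)) * x⁻¹ := by
      push_cast at hw
      rw [← hw]
      group
    have key : (x * (h' : G)⁻¹) * (x * (h : G)⁻¹)⁻¹ = w⁻¹ := by
      rw [hw']
      group
    rw [key]
    exact H.inv_mem hwH
  let E : (↥H ⧸ K') → {q : Quotient (QuotientGroup.rightRel H) // pcPi H q = DoubleCoset.mk H H x} :=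
    fun c => Quotient.liftOn' c φ wd
  have hinj : Function.Injective E := by
    intro c c'
    induction c using Quotient.inductionOn' with
    | h h =>
    induction c' using Quotient.inductionOn' with
    | h h' =>
    intro hEq
    have hq : (Quotient.mk'' (x * (h : G)⁻¹) : Quotient (QuotientGroup.rightRel H)) =
        Quotient.mk'' (x * (h' : G)⁻¹) := congrArg Subtype.val hEq
    rw [pc_mk_eq] at hq
    -- hq : (x * h'⁻¹) * (x * h⁻¹)⁻¹ ∈ H
    apply Quotient.sound'
    rw [QuotientGroup.leftRel_apply, hK', Subgroup.mem_subgroupOf]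
    constructor
    · exact mul_mem (H.inv_mem h.2) h'.2
    · refine ⟨((x * (h' : G)⁻¹) * (x * (h : G)⁻¹)⁻¹)⁻¹, H.inv_mem hq, ?_⟩
      simp only [MulEquiv.coe_toMonoidHom, MulAut.conj_apply, inv_inv]
      push_cast
      group
  have hsurj : Function.Surjective E := by
    rintro ⟨q, hq⟩
    induction q using Quotient.inductionOn' with
    | h g =>
    rw [pcPi_mk] at hq
    obtain ⟨hh, hhH, k, hkH, hx⟩ := (DoubleCoset.eq H H g x).1 hq
    refine ⟨Quotient.mk'' ⟨k, hkH⟩, ?_⟩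
    apply Subtype.ext
    show (Quotient.mk'' (x * k⁻¹) : Quotient (QuotientGroup.rightRel H)) = Quotient.mk'' g
    rw [pc_mk_eq]
    have : g * (x * k⁻¹)⁻¹ = hh⁻¹ := by
      rw [hx]
      group
    rw [this]
    exact H.inv_mem hhH
  have hcardEq : Nat.card (↥H ⧸ K') =
      Nat.card {q : Quotient (QuotientGroup.rightRel H) // pcPi H q = DoubleCoset.mk H H x} :=
    Nat.card_congr (Equiv.ofBijective E ⟨hinj, hsurj⟩)
  have hK'card : Nat.card K' = Nat.card Kx :=
    Nat.card_congr (Subgroup.subgroupOfEquivOfLe hKle).toEquiv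
  rw [← hcardEq, ← hK'card]
  exact (Subgroup.card_eq_card_quotient_mul_card_subgroup K').symm

end Counting

section Bridge
variable {G : Type*} [Group G]

private lemma pc_kset (H : Subgroup G) (x : G) :
    ((H : Set G) ∩ ((fun g => x⁻¹ * g * x) '' (H : Set G))) =
      ((H ⊓ H.map (MulAut.conj x⁻¹).toMonoidHom : Subgroup G) : Set G) := by
  rw [Subgroup.coe_inf, Subgroup.coe_map]
  congr 1
  ext g
  simp only [Set.mem_image, MulEquiv.coe_toMonoidHom, MulAut.conj_apply, inv_inv, SetLike.mem_coe]

private lemma pc_card_K (H : Subgroup G) (x : G) :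
    Nat.card (H ⊓ H.map (MulAut.conj x⁻¹).toMonoidHom : Subgroup G) =
      Nat.card (H ⊓ H.map (MulAut.conj x⁻¹⁻¹).toMonoidHom : Subgroup G) := by
  apply Nat.card_congr
  have hmem1 : ∀ g : G, g ∈ (H ⊓ H.map (MulAut.conj x⁻¹).toMonoidHom : Subgroup G) →
      x * g * x⁻¹ ∈ (H ⊓ H.map (MulAut.conj x⁻¹⁻¹).toMonoidHom : Subgroup G) := by
    rintro g ⟨hgH, w, hwH, hw⟩
    simp only [MulEquiv.coe_toMonoidHom, MulAut.conj_apply, inv_inv] at hw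
    constructor
    · rw [← hw]
      have : x * (x⁻¹ * w * x) * x⁻¹ = w := by group
      rw [this]
      exact hwH
    · refine ⟨g, hgH, ?_⟩
      simp only [MulEquiv.coe_toMonoidHom, MulAut.conj_apply, inv_inv]
  have hmem2 : ∀ g : G, g ∈ (H ⊓ H.map (MulAut.conj x⁻¹⁻¹).toMonoidHom : Subgroup G) →
      x⁻¹ * g * x ∈ (H ⊓ H.map (MulAut.conj x⁻¹).toMonoidHom : Subgroup G) := by
    rintro g ⟨hgH, w, hwH, hw⟩
    simp only [MulEquiv.coe_toMonoidHom, MulAut.conj_apply, inv_inv] at hw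
    constructor
    · rw [← hw]
      have : x⁻¹ * (x * w * x⁻¹) * x = w := by group
      rw [this]
      exact hwH
    · refine ⟨g, hgH, ?_⟩
      simp only [MulEquiv.coe_toMonoidHom, MulAut.conj_apply, inv_inv]
  exact {
    toFun := fun g => ⟨x * (g : G) * x⁻¹, hmem1 g g.2⟩
    invFun := fun g => ⟨x⁻¹ * (g : G) * x, hmem2 g g.2⟩
    left_inv := fun g => by
      apply Subtype.ext
      show x⁻¹ * (x * (g : G) * x⁻¹) * x = (g : G)
      group
    right_inv := fun g => by
      apply Subtype.ext
      show x * (x⁻¹ * (g : G) * x) * x⁻¹ = (g : G)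
      group }

private lemma pc_card_fiber_div [Fintype G] (H : Subgroup G) (x : G) :
    Nat.card {q : Quotient (QuotientGroup.rightRel H) // pcPi H q = DoubleCoset.mk H H x} =
      Nat.card H / ((H : Set G) ∩ ((fun g => x⁻¹ * g * x) '' (H : Set G))).ncard := by
  have h1 := pc_card_fiber H x
  have h2 : ((H : Set G) ∩ ((fun g => x⁻¹ * g * x) '' (H : Set G))).ncard =
      Nat.card (H ⊓ H.map (MulAut.conj x⁻¹).toMonoidHom : Subgroup G) := by
    rw [← Nat.card_coe_set_eq, pc_kset]
    rfl
  rw [h2]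
  have hpos : 0 < Nat.card (H ⊓ H.map (MulAut.conj x⁻¹).toMonoidHom : Subgroup G) :=
    Nat.card_pos
  exact (Nat.div_eq_of_eq_mul_left hpos h1.symm).symm

end Bridge

section Helpers
variable {G : Type*} [Group G]

private lemma pc_mem_iff (H : Subgroup G) {t g : G} :
    t * g⁻¹ ∈ H ↔ (Quotient.mk'' t : Quotient (QuotientGroup.rightRel H)) = Quotient.mk'' g := by
  rw [pc_mk_eq]
  constructor
  · intro h
    have := H.inv_mem h
    simpa using this
  · intro h
    have := H.inv_mem h
    simpa using this

private lemma pc_pi_out (H : Subgroup G) (r : Quotient (QuotientGroup.rightRel H)) :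
    pcPi H r = DoubleCoset.mk H H (Quotient.out r) := by
  conv_lhs => rw [← Quotient.out_eq' r]
  rfl

end Helpers

/-- H is a perfect code of G: it admits an inverse-closed right transversal in G. -/
def IsPerfectCode {G : Type*} [Group G] (H : Subgroup G) : Prop :=
  ∃ T : Set G, (∀ g : G, ∃! t, t ∈ T ∧ t * g⁻¹ ∈ H) ∧ T⁻¹ = T

theorem stmt9 {G : Type*} [Group G] [Fintype G] (H : Subgroup G) :
    IsPerfectCode H ↔
      ∀ x : G,
        (H : Set G) * {x} * (H : Set G) = (H : Set G) * {x⁻¹} * (H : Set G) →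
        Odd (Nat.card H /
          ((H : Set G) ∩ ((fun g => x⁻¹ * g * x) '' (H : Set G))).ncard) →
        ∃ y ∈ (H : Set G) * {x}, y ^ 2 = 1 := by
  constructor
  · rintro ⟨T, hT, hTinv⟩ x hx hodd
    have hrep : ∀ q : Quotient (QuotientGroup.rightRel H), ∃ t,
        (t ∈ T ∧ (Quotient.mk'' t : Quotient (QuotientGroup.rightRel H)) = q) ∧
        ∀ t', t' ∈ T → (Quotient.mk'' t' : Quotient (QuotientGroup.rightRel H)) = q → t' = t := by
      intro q
      obtain ⟨t, ⟨htT, htH⟩, huniq⟩ := hT (Quotient.out q)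
      refine ⟨t, ⟨htT, ((pc_mem_iff H).1 htH).trans (Quotient.out_eq' q)⟩, ?_⟩
      intro t' ht'T ht'q
      exact huniq t' ⟨ht'T, (pc_mem_iff H).2 (ht'q.trans (Quotient.out_eq' q).symm)⟩
    choose rep hrep1 hrep2 using hrep
    have hrepT : ∀ q, rep q ∈ T := fun q => (hrep1 q).1
    have hrepq : ∀ q, (Quotient.mk'' (rep q) : Quotient (QuotientGroup.rightRel H)) = q :=
      fun q => (hrep1 q).2
    have hrepinvT : ∀ q, (rep q)⁻¹ ∈ T := by
      intro q
      rw [← hTinv]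
      simpa using hrepT q
    have hoddc : Odd (Nat.card {q : Quotient (QuotientGroup.rightRel H) //
        pcPi H q = DoubleCoset.mk H H x}) := by
      rw [pc_card_fiber_div]
      exact hodd
    have hmkinv : DoubleCoset.mk H H x⁻¹ = DoubleCoset.mk H H x :=
      (pc_mk_eq_doset H).2 hx.symm
    have hmkrep : ∀ q : Quotient (QuotientGroup.rightRel H), pcPi H q = DoubleCoset.mk H H x →
        DoubleCoset.mk H H (rep q) = DoubleCoset.mk H H x := by
      intro q hq
      have : pcPi H (Quotient.mk'' (rep q)) = DoubleCoset.mk H H x := by rw [hrepq q]; exact hq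
      rwa [pcPi_mk] at this
    let j : {q : Quotient (QuotientGroup.rightRel H) // pcPi H q = DoubleCoset.mk H H x} →
        {q : Quotient (QuotientGroup.rightRel H) // pcPi H q = DoubleCoset.mk H H x} :=
      fun p => ⟨Quotient.mk'' (rep p.1)⁻¹, by
        rw [pcPi_mk]
        have := congrArg (pcF H) (hmkrep p.1 p.2)
        rw [pcF_mk, pcF_mk] at this
        exact this.trans hmkinv⟩
    have hj : ∀ p, j (j p) = p := by
      rintro ⟨q, hq⟩
      apply Subtype.ext
      show (Quotient.mk'' (rep (Quotient.mk'' (rep q)⁻¹))⁻¹ :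
        Quotient (QuotientGroup.rightRel H)) = q
      have e : rep (Quotient.mk'' (rep q)⁻¹) = (rep q)⁻¹ := (hrep2 _ _ (hrepinvT q) rfl).symm
      rw [e, inv_inv, hrepq]
    obtain ⟨⟨q, hq⟩, hfix⟩ := pc_exists_fixed j hj hoddc
    have hfix' : (Quotient.mk'' (rep q)⁻¹ : Quotient (QuotientGroup.rightRel H)) = q :=
      congrArg Subtype.val hfix
    have hinv : (rep q)⁻¹ = rep q := hrep2 q _ (hrepinvT q) hfix'
    have hu2 : (rep q) ^ 2 = 1 := by
      rw [sq]
      nth_rewrite 2 [← hinv]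
      group
    have humem : rep q ∈ DoubleCoset.doubleCoset x (H : Set G) H := by
      rw [← (pc_mk_eq_doset H).1 (hmkrep q hq)]
      exact DoubleCoset.mem_doubleCoset_self H H (rep q)
    exact pc_spread H humem hu2
  · intro hyp
    have hcardfib : ∀ b, Nat.card {q : Quotient (QuotientGroup.rightRel H) //
        pcPi H q = pcF H b} = Nat.card {q : Quotient (QuotientGroup.rightRel H) //
        pcPi H q = b} := by
      intro b
      induction b using Quotient.inductionOn' with
      | h g =>
        show Nat.card {q : Quotient (QuotientGroup.rightRel H) //
            pcPi H q = DoubleCoset.mk H H g⁻¹} = _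
        have h1 := pc_card_fiber H g
        have h2 := pc_card_fiber H g⁻¹
        have h3 := pc_card_K H g
        rw [← h3] at h2
        have hpos : 0 < Nat.card (H ⊓ H.map (MulAut.conj g⁻¹).toMonoidHom : Subgroup G) :=
          Nat.card_pos
        exact Nat.eq_of_mul_eq_mul_right hpos (h2.trans h1.symm)
    have hcond : ∀ b, pcF H b = b →
        Odd (Nat.card {q : Quotient (QuotientGroup.rightRel H) // pcPi H q = b}) →
        pcGood H b := by
      intro b
      induction b using Quotient.inductionOn' with
      | h g =>
        intro hFb hoddb
        have hFb' : DoubleCoset.mk H H g⁻¹ = DoubleCoset.mk H H g := hFb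
        have hds : DoubleCoset.doubleCoset g⁻¹ (H : Set G) H = DoubleCoset.doubleCoset g (H : Set G) H :=
          (pc_mk_eq_doset H).1 hFb'
        rw [pc_card_fiber_div] at hoddb
        obtain ⟨y, hy, hy2⟩ := hyp g hds.symm hoddb
        refine ⟨y, ?_, hy2⟩
        rw [pc_mem_coset] at hy
        exact (DoubleCoset.eq H H y g).2 ⟨(y * g⁻¹)⁻¹, H.inv_mem hy, 1, one_mem _, by group⟩
    obtain ⟨σ, hσ2, hσπ, hσg⟩ :=
      pc_matching (pcPi H) (pcF H) (pcF_invol H) (pcGood H) hcardfib hcond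
    have claim : ∀ q : Quotient (QuotientGroup.rightRel H), ∃ t : G,
        (Quotient.mk'' t : Quotient (QuotientGroup.rightRel H)) = q ∧
        (Quotient.mk'' t⁻¹ : Quotient (QuotientGroup.rightRel H)) = σ q ∧
        (σ q = q → t ^ 2 = 1) := by
      intro q
      by_cases hq : σ q = q
      · obtain ⟨t₀, ht₀, ht₀2⟩ := hσg q hq
        have h1 : DoubleCoset.mk H H t₀ = DoubleCoset.mk H H (Quotient.out q) := ht₀.trans (pc_pi_out H q)
        have h2 : t₀ ∈ DoubleCoset.doubleCoset (Quotient.out q) (H : Set G) H := by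
          rw [← (pc_mk_eq_doset H).1 h1]
          exact DoubleCoset.mem_doubleCoset_self H H t₀
        obtain ⟨y, hy, hy2⟩ := pc_spread H h2 ht₀2
        have hyq : (Quotient.mk'' y : Quotient (QuotientGroup.rightRel H)) = q := by
          rw [← Quotient.out_eq' q]
          exact (pc_mem_iff H).1 ((pc_mem_coset H).1 hy)
        have hyinv : y⁻¹ = y := inv_eq_of_mul_eq_one_right (by rw [← sq]; exact hy2)
        exact ⟨y, hyq, by rw [hyinv, hyq, hq], fun _ => hy2⟩
      · have t1 := hσπ q
        rw [pc_pi_out H q, pc_pi_out H (σ q), pcF_mk] at t1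
        obtain ⟨aa, haa, bb, hbb, hg'⟩ :=
          (DoubleCoset.eq H H (Quotient.out q)⁻¹ (Quotient.out (σ q))).1 t1.symm
        refine ⟨bb⁻¹ * Quotient.out q, ?_, ?_, fun h => absurd h hq⟩
        · have hm : (bb⁻¹ * Quotient.out q) * (Quotient.out q)⁻¹ ∈ H := by
            have e : (bb⁻¹ * Quotient.out q) * (Quotient.out q)⁻¹ = bb⁻¹ := by group
            rw [e]
            exact H.inv_mem hbb
          exact ((pc_mem_iff H).1 hm).trans (Quotient.out_eq' q)
        · have hm : (bb⁻¹ * Quotient.out q)⁻¹ * (Quotient.out (σ q))⁻¹ ∈ H := by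
            have e : (bb⁻¹ * Quotient.out q)⁻¹ * (Quotient.out (σ q))⁻¹ = aa⁻¹ := by
              rw [hg']
              group
            rw [e]
            exact H.inv_mem haa
          exact ((pc_mem_iff H).1 hm).trans (Quotient.out_eq' (σ q))
    choose u hu1 hu2 hu3 using claim
    obtain ⟨n, ⟨eQ⟩⟩ := Finite.exists_equiv_fin (Quotient (QuotientGroup.rightRel H))
    set tfun : Quotient (QuotientGroup.rightRel H) → G :=
      fun q => if (eQ q : ℕ) ≤ (eQ (σ q) : ℕ) then u q else (u (σ q))⁻¹ with htfun
    have hmem : ∀ q, (Quotient.mk'' (tfun q) : Quotient (QuotientGroup.rightRel H)) = q := by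
      intro q
      rw [htfun]
      by_cases h : (eQ q : ℕ) ≤ (eQ (σ q) : ℕ)
      · simp only [if_pos h]
        exact hu1 q
      · simp only [if_neg h]
        exact (hu2 (σ q)).trans (hσ2 q)
    have hinvt : ∀ q, (tfun q)⁻¹ = tfun (σ q) := by
      intro q
      by_cases h1 : (eQ q : ℕ) ≤ (eQ (σ q) : ℕ) <;>
        by_cases h2 : (eQ (σ q) : ℕ) ≤ (eQ q : ℕ)
      · have hqq : q = σ q := by
          have : eQ q = eQ (σ q) := Fin.ext (le_antisymm h1 h2)
          exact eQ.injective this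
        rw [← hqq]
        simp only [htfun, ← hqq, if_pos (le_refl ((eQ q : ℕ)))]
        have := hu3 q hqq.symm
        rw [sq] at this
        exact inv_eq_of_mul_eq_one_right this
      · simp only [htfun, hσ2]
        rw [if_pos h1, if_neg h2]
      · simp only [htfun, hσ2]
        rw [if_neg h1, if_pos h2, inv_inv]
      · omega
    refine ⟨Set.range tfun, ?_, ?_⟩
    · intro g
      refine ⟨tfun (Quotient.mk'' g), ⟨⟨_, rfl⟩, (pc_mem_iff H).2 (hmem _)⟩, ?_⟩
      rintro t' ⟨⟨q', rfl⟩, ht'⟩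
      have : q' = (Quotient.mk'' g : Quotient (QuotientGroup.rightRel H)) :=
        (hmem q').symm.trans ((pc_mem_iff H).1 ht')
      rw [this]
    · ext z
      simp only [Set.mem_inv, Set.mem_range]
      constructor
      · rintro ⟨q, hq⟩
        exact ⟨σ q, by rw [← hinvt q, hq, inv_inv]⟩
      · rintro ⟨q, rfl⟩
        exact ⟨σ q, (hinvt q).symm⟩
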